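/- Suppose φ is β-strongly convex (β > 0) with global minimum value φ*. Let d := B⁻¹g, α > 0, θ ∈ (0,1), x⁺ := x − α d, and let f, f⁺ ∈ ℝ satisfy e + e⁺ ≤ 2ε_f where e := |f − φ(x)|, e⁺ := |f⁺ − φ(x⁺)| and ε_f ≥ 0. Assume f⁺ ≤ f − α θ ⟨d, g⟩ + 2ε_f, that either ‖g − ∇φ(x)‖ ≤ τ‖g‖ for some τ ≥ 0 or ‖g − ∇φ(x)‖ ≤ η‖∇φ(x)‖ for some η ∈ (0,1), and that φ(x) − φ* > ε for some ε ≥ 4ε_f. Define m := min{1/(1 + τ)², (1 − η)²} · α θ σ_lb β. Then φ(x⁺) − φ* ≤ (1 − m)(1 + (2ε_f + e + e⁺)/ε)(φ(x) − φ*). -/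

import Mathlib

open scoped RealInnerProductSpace
open Matrix

set_option maxHeartbeats 1000000 in
lemma aux_quad {n : ℕ} (B : Matrix (Fin n) (Fin n) ℝ) (hB : B.IsHermitian) (hPD : B.PosDef)
    (c : ℝ) (heig : ∀ i, hB.eigenvalues i ≤ c) (g : EuclideanSpace ℝ (Fin n)) :
    (1/c) * ‖g‖^2 ≤ ⟪Matrix.toEuclideanLin B⁻¹ g, g⟫ := by
  classical
  set b := hB.eigenvectorBasis with hb
  set lam := hB.eigenvalues with hlam
  have hlpos : ∀ j, 0 < lam j := fun j => hPD.eigenvalues_pos j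
  have hdet : IsUnit B.det := hPD.det_pos.ne'.isUnit
  have hTb : ∀ j, Matrix.toEuclideanLin B⁻¹ (b j) = (lam j)⁻¹ • b j := by
    intro j
    have h4 : B⁻¹ *ᵥ (lam j • ⇑(b j)) = ⇑(b j) := by
      rw [← hB.mulVec_eigenvectorBasis j, Matrix.mulVec_mulVec,
        Matrix.nonsing_inv_mul B hdet, Matrix.one_mulVec]
    rw [Matrix.mulVec_smul] at h4
    have h3 : B⁻¹ *ᵥ ⇑(b j) = (lam j)⁻¹ • ⇑(b j) := by
      have h5 := congrArg (fun w => (lam j)⁻¹ • w) h4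
      simpa [smul_smul, inv_mul_cancel₀ (hlpos j).ne'] using h5
    ext i
    simp only [Matrix.toEuclideanLin_apply]
    simp [h3]
  have hsymm : (B⁻¹)ᵀ = B⁻¹ := by
    have h2 : (B⁻¹)ᴴ = B⁻¹ := hPD.inv.1
    rwa [Matrix.conjTranspose_eq_transpose_of_trivial] at h2
  have hdp : ∀ a c : Fin n → ℝ, (B⁻¹ *ᵥ a) ⬝ᵥ c = a ⬝ᵥ (B⁻¹ *ᵥ c) := by
    intro a c
    rw [Matrix.dotProduct_mulVec, ← Matrix.mulVec_transpose, hsymm]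
  have hadj : ∀ u w : EuclideanSpace ℝ (Fin n),
      ⟪Matrix.toEuclideanLin B⁻¹ u, w⟫ = ⟪u, Matrix.toEuclideanLin B⁻¹ w⟫ := by
    intro u w
    simp only [Matrix.toEuclideanLin_apply, PiLp.inner_apply, RCLike.inner_apply,
      conj_trivial]
    simpa [dotProduct, mul_comm] using hdp u.ofLp w.ofLp
  have hsum : ⟪Matrix.toEuclideanLin B⁻¹ g, g⟫ = ∑ j, (lam j)⁻¹ * (⟪b j, g⟫ * ⟪b j, g⟫) := by
    rw [← b.sum_inner_mul_inner (Matrix.toEuclideanLin B⁻¹ g) g]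
    refine Finset.sum_congr rfl fun j _ => ?_
    rw [hadj, hTb j, real_inner_smul_right, real_inner_comm]
    ring
  have hnorm : ‖g‖^2 = ∑ j, ⟪b j, g⟫ * ⟪b j, g⟫ := by
    rw [← real_inner_self_eq_norm_sq, ← b.sum_inner_mul_inner g g]
    refine Finset.sum_congr rfl fun j _ => by rw [real_inner_comm]
  rw [hsum, hnorm, Finset.mul_sum]
  refine Finset.sum_le_sum fun j _ => ?_
  have hsq : 0 ≤ ⟪b j, g⟫ * ⟪b j, g⟫ := mul_self_nonneg _
  have : 1/c ≤ (lam j)⁻¹ := by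
    rw [one_div]
    exact inv_anti₀ (hlpos j) (heig j)
  exact mul_le_mul_of_nonneg_right this hsq

set_option maxHeartbeats 1000000 in
theorem stmt10 {n : ℕ} (hn : 1 ≤ n)
    (φ : EuclideanSpace ℝ (Fin n) → ℝ) (hφ : ContDiff ℝ 1 φ)
    (β : ℝ) (hβ : 0 < β)
    (hsc : ∀ a b : EuclideanSpace ℝ (Fin n),
      φ b + ⟪gradient φ b, a - b⟫ + β / 2 * ‖a - b‖ ^ 2 ≤ φ a)
    (φstar : ℝ) (hlb : ∀ y, φstar ≤ φ y) (hatt : ∃ z, φ z = φstar)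
    (B : Matrix (Fin n) (Fin n) ℝ) (hB : B.IsHermitian) (hPD : B.PosDef)
    (σlbB σubB σlb σub : ℝ) (h0 : 0 < σlbB) (hord : σlbB ≤ σubB)
    (heig : ∀ i, σlbB ≤ hB.eigenvalues i ∧ hB.eigenvalues i ≤ σubB)
    (hσlb : σlb = 1 / σubB) (hσub : σub = 1 / σlbB)
    (x g : EuclideanSpace ℝ (Fin n))
    (α : ℝ) (hα0 : 0 < α) (θ : ℝ) (hθ : θ ∈ Set.Ioo (0 : ℝ) 1)
    (εf : ℝ) (hεf : 0 ≤ εf) (f fplus : ℝ)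
    (hnoise : |f - φ x| + |fplus - φ (x - α • Matrix.toEuclideanLin B⁻¹ g)| ≤ 2 * εf)
    (hsucc : fplus ≤ f - α * θ * ⟪Matrix.toEuclideanLin B⁻¹ g, g⟫ + 2 * εf)
    (τ : ℝ) (hτ : 0 ≤ τ) (η : ℝ) (hη : η ∈ Set.Ioo (0 : ℝ) 1)
    (hg : ‖g - gradient φ x‖ ≤ τ * ‖g‖ ∨ ‖g - gradient φ x‖ ≤ η * ‖gradient φ x‖)
    (ε : ℝ) (hε : 4 * εf ≤ ε) (hgap : ε < φ x - φstar)
    (m : ℝ) (hm : m = min (1 / (1 + τ) ^ 2) ((1 - η) ^ 2) * (α * θ * σlb * β)) :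
    φ (x - α • Matrix.toEuclideanLin B⁻¹ g) - φstar ≤
      (1 - m) * (1 + (2 * εf + |f - φ x| +
        |fplus - φ (x - α • Matrix.toEuclideanLin B⁻¹ g)|) / ε) * (φ x - φstar) := by
  obtain ⟨hθ0, hθ1⟩ := hθ
  set I : ℝ := ⟪Matrix.toEuclideanLin B⁻¹ g, g⟫ with hI
  obtain ⟨hη0, hη1⟩ := hη
  set xp := x - α • Matrix.toEuclideanLin B⁻¹ g with hxp
  set G := gradient φ x with hG
  set e := |f - φ x| with he
  set ep := |fplus - φ xp| with hep
  set gap := φ x - φstar with hgapdef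
  have hgap0 : 0 < gap := lt_of_le_of_lt (le_trans (by linarith) hε) hgap
  have hσubB : 0 < σubB := lt_of_lt_of_le h0 hord
  have hσlb0 : 0 < σlb := by rw [hσlb]; positivity
  -- PL inequality
  have hPL : 2 * β * gap ≤ ‖G‖ ^ 2 := by
    obtain ⟨z, hz⟩ := hatt
    have h1 := hsc z x
    rw [hz] at h1
    have h2 : -(‖G‖ * ‖z - x‖) ≤ ⟪G, z - x⟫ := by
      have := abs_real_inner_le_norm G (z - x)
      have h3 := neg_abs_le ⟪G, z - x⟫
      nlinarith [abs_nonneg ⟪G, z - x⟫]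
    nlinarith [sq_nonneg (‖G‖ - β * ‖z - x‖), norm_nonneg (z - x)]
  -- gradient accuracy
  set mmin := min (1 / (1 + τ) ^ 2) ((1 - η) ^ 2) with hmmin
  have hmmin0 : 0 < mmin := by
    apply lt_min
    · positivity
    · exact pow_pos (by linarith) 2
  have hGg : mmin * ‖G‖ ^ 2 ≤ ‖g‖ ^ 2 := by
    have hGle : ‖G‖ ≤ ‖g‖ + ‖g - G‖ := by
      calc ‖G‖ = ‖g - (g - G)‖ := by congr 1; abel
      _ ≤ ‖g‖ + ‖g - G‖ := norm_sub_le _ _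
    rcases hg with hg | hg
    · have h1 : ‖G‖ ≤ (1 + τ) * ‖g‖ := by linarith
      have h2 : mmin ≤ 1 / (1 + τ) ^ 2 := min_le_left _ _
      have h3 : ‖G‖ ^ 2 ≤ (1 + τ) ^ 2 * ‖g‖ ^ 2 := by nlinarith [norm_nonneg G, norm_nonneg g]
      have h4 : mmin * ‖G‖ ^ 2 ≤ (1 / (1 + τ) ^ 2) * ((1 + τ) ^ 2 * ‖g‖ ^ 2) := by
        apply mul_le_mul h2 h3 (sq_nonneg _) (one_div_nonneg.mpr (sq_nonneg _))
      calc mmin * ‖G‖ ^ 2 ≤ (1 / (1 + τ) ^ 2) * ((1 + τ) ^ 2 * ‖g‖ ^ 2) := h4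
      _ = ‖g‖ ^ 2 := by field_simp
    · have h1 : (1 - η) * ‖G‖ ≤ ‖g‖ := by linarith
      have h2 : mmin ≤ (1 - η) ^ 2 := min_le_right _ _
      have h3 : (1 - η) * ‖G‖ ≥ 0 := mul_nonneg (by linarith) (norm_nonneg _)
      nlinarith [norm_nonneg G, sq_nonneg ‖G‖]
  -- curvature bound
  have hdg : σlb * ‖g‖ ^ 2 ≤ I := by
    have h := aux_quad B hB hPD σubB (fun i => (heig i).2) g
    have h' : (1 / σubB) * ‖g‖ ^ 2 ≤ I := h
    rw [hσlb]
    linarith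
  -- decrease
  have hdec : 2 * m * gap ≤ α * θ * I := by
    have h1 : mmin * (2 * β * gap) ≤ mmin * ‖G‖ ^ 2 :=
      mul_le_mul_of_nonneg_left hPL hmmin0.le
    have h2 : σlb * (mmin * (2 * β * gap)) ≤ σlb * ‖g‖ ^ 2 := by
      apply mul_le_mul_of_nonneg_left (le_trans h1 hGg) hσlb0.le
    have h3 : σlb * (mmin * (2 * β * gap)) ≤ I := le_trans h2 hdg
    have h4 := mul_le_mul_of_nonneg_left h3 (by positivity : (0:ℝ) ≤ α * θ)
    calc 2 * m * gap = α * θ * (σlb * (mmin * (2 * β * gap))) := by rw [hm]; ring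
    _ ≤ α * θ * I := h4
  -- main chain
  have hfe : f ≤ φ x + e := by
    have := le_abs_self (f - φ x); linarith
  have hfpe : φ xp ≤ fplus + ep := by
    have := neg_abs_le (fplus - φ xp); linarith
  have hkey : φ xp - φstar ≤ (1 - 2 * m) * gap + (2 * εf + e + ep) := by
    have h1 : φ xp - φstar ≤ gap + (2 * εf + e + ep) - α * θ * I := by
      rw [hgapdef]; linarith [hsucc, hfe, hfpe]
    have h2 : (1 - 2 * m) * gap = gap - 2 * m * gap := by ring
    rw [h2]; linarith [hdec]
  have hxplb : 0 ≤ φ xp - φstar := by linarith [hlb xp]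
  set N := 2 * εf + e + ep with hN
  have hN0 : 0 ≤ N := by positivity
  have hNε : N ≤ ε := by
    rw [hN]; linarith
  have hm0 : 0 ≤ m := by
    rw [hm]; positivity
  have hm1 : m < 1 := by
    nlinarith
  have hε0 : 0 ≤ ε := le_trans (by linarith) hε
  rcases eq_or_lt_of_le hε0 with hε0' | hε0'
  · -- ε = 0 : then N = 0
    have hNz : N = 0 := le_antisymm (by linarith) hN0
    rw [hNz] at hkey ⊢
    rw [← hε0']
    norm_num
    nlinarith [hkey, mul_nonneg hm0 hgap0.le]
  · -- ε > 0
    have hrw : (1 - m) * (1 + N / ε) * gap = (1 - m) * (ε + N) * gap / ε := by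
      field_simp
    have hgoal : φ xp - φstar ≤ (1 - m) * (1 + N / ε) * gap := by
      rw [hrw, le_div_iff₀ hε0']
      nlinarith [mul_nonneg hN0 (by linarith : (0:ℝ) ≤ gap - ε),
        mul_nonneg (mul_nonneg hm0 hgap0.le) (by linarith : (0:ℝ) ≤ ε - N)]
    exact hgoal
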